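/- For q ≥ 1 and S = qℕ* (positive multiples of q), the constants are τ_{qℕ*} = (1/(q+1))^{1/q}, ρ_{qℕ*} = (q/(q+1))·(1/(q+1))^{1/q}, α_{qℕ*} = (q+1)/q, and β_{qℕ*} = √(2(q+1)/q²). In particular, Σ_{n≥1}(qn−1)x^{qn} = 1 + ((q+1)x^q − 1)/(1−x^q)² for |x| < 1, and τ_{qℕ*} is the unique positive solution of Σ_{n≥1}(qn−1)τ^{qn} = 1. -/

import Mathlib

lemma master (a b c y : ℝ) (hy : |y| < 1) :
    HasSum (fun n : ℕ => (a * ((n : ℝ) + 1) ^ 2 + b * ((n : ℝ) + 1) + c) * y ^ (n + 1))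
      (a * (y * (1 + y) / (1 - y) ^ 3) + b * (y / (1 - y) ^ 2) + c * (y / (1 - y))) := by
  have hy' : ‖y‖ < 1 := by rwa [Real.norm_eq_abs]
  have H0 : HasSum (fun n : ℕ => y ^ n) (1 / (1 - y)) := by
    simpa [one_div] using hasSum_geometric_of_norm_lt_one hy'
  have H1 : HasSum (fun n : ℕ => ((n : ℝ) + 1) * y ^ n) (1 / (1 - y) ^ 2) := by
    have := hasSum_choose_mul_geometric_of_norm_lt_one 1 hy'
    convert! this using 2 with n
    simp
  have H2 : HasSum (fun n : ℕ => (((n : ℝ) + 1) * ((n : ℝ) + 2)) * y ^ n)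
      (2 * (1 / (1 - y) ^ 3)) := by
    have := (hasSum_choose_mul_geometric_of_norm_lt_one 2 hy').mul_left 2
    convert! this using 2 with n
    have h2 : (n + 2) * (n + 1) = 2 * (n + 2).choose 2 := by
      have h := Nat.descFactorial_eq_factorial_mul_choose (n + 2) 2
      simpa [Nat.descFactorial_succ, Nat.descFactorial_zero, Nat.factorial, mul_comm] using h
    have h2' : ((n : ℝ) + 2) * ((n : ℝ) + 1) = 2 * ((n + 2).choose 2 : ℝ) := by
      exact_mod_cast congrArg (Nat.cast : ℕ → ℝ) h2
    linear_combination y ^ n * h2'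
  have C : HasSum (fun n : ℕ =>
      y * ((a * ((((n:ℝ)+1)*((n:ℝ)+2)) * y ^ n) + (b - a) * (((n:ℝ)+1) * y ^ n)) + c * y ^ n))
      (y * ((a * (2 * (1/(1-y)^3)) + (b - a) * (1/(1-y)^2)) + c * (1/(1-y)))) :=
    (((H2.mul_left a).add (H1.mul_left (b - a))).add (H0.mul_left c)).mul_left y
  have h1y : (1 : ℝ) - y ≠ 0 := by
    intro h; rw [sub_eq_zero] at h; rw [← h] at hy; simp at hy
  convert C using 1
  · exact funext fun n => by ring
  · field_simp
    ring

lemma tsum_form (q : ℕ) (hq : 1 ≤ q) (a b c x : ℝ) (hx : |x| < 1) :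
    HasSum (fun n : ℕ => (a * ((n : ℝ) + 1) ^ 2 + b * ((n : ℝ) + 1) + c) * x ^ (q * (n + 1)))
      (a * (x ^ q * (1 + x ^ q) / (1 - x ^ q) ^ 3) + b * (x ^ q / (1 - x ^ q) ^ 2)
        + c * (x ^ q / (1 - x ^ q))) := by
  have hy : |x ^ q| < 1 := by
    rw [abs_pow]; exact pow_lt_one₀ (abs_nonneg x) hx (by omega)
  have := master a b c (x ^ q) hy
  convert this using 1
  exact funext fun n => by rw [pow_mul]

theorem qMultiple_constants (q : ℕ) (hq : 1 ≤ q) :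
    let τ : ℝ := (1 / ((q : ℝ) + 1)) ^ ((1 : ℝ) / q)
    (∀ x : ℝ, |x| < 1 →
      ∑' n : ℕ, ((q : ℝ) * (n + 1) - 1) * x ^ (q * (n + 1)) =
        1 + (((q : ℝ) + 1) * x ^ q - 1) / (1 - x ^ q) ^ 2) ∧
    ((∑' n : ℕ, ((q : ℝ) * (n + 1) - 1) * τ ^ (q * (n + 1))) = 1 ∧
      ∀ τ' : ℝ, 0 < τ' →
        (∑' n : ℕ, ((q : ℝ) * (n + 1) - 1) * τ' ^ (q * (n + 1))) = 1 → τ' = τ) ∧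
    τ / (∑' n : ℕ, ((q : ℝ) * (n + 1)) * τ ^ (q * (n + 1))) =
      ((q : ℝ) / ((q : ℝ) + 1)) * (1 / ((q : ℝ) + 1)) ^ ((1 : ℝ) / q) ∧
    1 + (∑' n : ℕ, τ ^ (q * (n + 1))) = ((q : ℝ) + 1) / q ∧
    Real.sqrt (2 * (∑' n : ℕ, ((q : ℝ) * (n + 1)) * τ ^ (q * (n + 1))) ^ 3 /
        (∑' n : ℕ, ((q : ℝ) * (n + 1)) * ((q : ℝ) * (n + 1) - 1) * τ ^ (q * (n + 1)))) =
      Real.sqrt (2 * ((q : ℝ) + 1) / (q : ℝ) ^ 2) := by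
  intro τ
  have hq0 : (q : ℝ) ≠ 0 := Nat.cast_ne_zero.2 (by omega)
  have hqpos : (0 : ℝ) < q := by positivity
  have hq1 : (0 : ℝ) < (q : ℝ) + 1 := by positivity
  have hbase : (0 : ℝ) < 1 / ((q : ℝ) + 1) := by positivity
  have hτpos : 0 < τ := Real.rpow_pos_of_pos hbase _
  have hτlt1 : τ < 1 := by
    apply Real.rpow_lt_one hbase.le
    · rw [div_lt_one hq1]; linarith
    · positivity
  have hτabs : |τ| < 1 := by rw [abs_of_pos hτpos]; exact hτlt1
  have hτq : τ ^ q = 1 / ((q : ℝ) + 1) := by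
    rw [← Real.rpow_natCast τ q]
    show ((1 / ((q : ℝ) + 1)) ^ ((1 : ℝ) / q)) ^ (q : ℝ) = _
    rw [← Real.rpow_mul hbase.le, one_div_mul_cancel hq0, Real.rpow_one]
  have hsub : (1 : ℝ) - 1 / ((q : ℝ) + 1) = q / ((q : ℝ) + 1) := by field_simp; ring
  -- closed form part
  have part1 : ∀ x : ℝ, |x| < 1 →
      ∑' n : ℕ, ((q : ℝ) * (n + 1) - 1) * x ^ (q * (n + 1)) =
        1 + (((q : ℝ) + 1) * x ^ q - 1) / (1 - x ^ q) ^ 2 := by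
    intro x hx
    have h1y : (1 : ℝ) - x ^ q ≠ 0 := by
      have : |x ^ q| < 1 := by
        rw [abs_pow]; exact pow_lt_one₀ (abs_nonneg x) hx (by omega)
      intro h; rw [sub_eq_zero] at h; rw [← h] at this; simp at this
    rw [tsum_congr (g := fun n : ℕ =>
        ((0 : ℝ) * ((n : ℝ) + 1) ^ 2 + ((q : ℝ)) * ((n : ℝ) + 1) + (-1)) * x ^ (q * (n + 1)))
      (fun n => by ring), (tsum_form q hq 0 q (-1) x hx).tsum_eq]
    field_simp
    ring
  have E2 : (∑' n : ℕ, ((q : ℝ) * (n + 1)) * τ ^ (q * (n + 1))) = ((q : ℝ) + 1) / q := by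
    rw [tsum_congr (g := fun n : ℕ =>
        ((0 : ℝ) * ((n : ℝ) + 1) ^ 2 + ((q : ℝ)) * ((n : ℝ) + 1) + (0 : ℝ)) * τ ^ (q * (n + 1)))
      (fun n => by ring), (tsum_form q hq 0 q 0 τ hτabs).tsum_eq, hτq, hsub]
    field_simp
    ring
  have E4 : (∑' n : ℕ, ((q : ℝ) * (n + 1)) * ((q : ℝ) * (n + 1) - 1) * τ ^ (q * (n + 1))) =
      ((q : ℝ) + 1) ^ 2 / q := by
    rw [tsum_congr (g := fun n : ℕ =>
        (((q : ℝ) ^ 2) * ((n : ℝ) + 1) ^ 2 + (-(q : ℝ)) * ((n : ℝ) + 1) + (0 : ℝ)) *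
          τ ^ (q * (n + 1)))
      (fun n => by ring), (tsum_form q hq (q ^ 2) (-q) 0 τ hτabs).tsum_eq, hτq, hsub]
    field_simp
    ring
  refine ⟨part1, ⟨?_, ?_⟩, ?_, ?_, ?_⟩
  · -- sum at τ equals 1
    rw [part1 τ hτabs, hτq, hsub]
    field_simp
    ring
  · -- uniqueness
    intro τ' hτ' hsum
    rcases lt_or_ge τ' 1 with hlt | hge
    · have habs' : |τ'| < 1 := by rw [abs_of_pos hτ']; exact hlt
      have h1y : (1 : ℝ) - τ' ^ q ≠ 0 := by
        have : |τ' ^ q| < 1 := by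
          rw [abs_pow]; exact pow_lt_one₀ (abs_nonneg τ') habs' (by omega)
        intro h; rw [sub_eq_zero] at h; rw [← h] at this; simp at this
      rw [part1 τ' habs'] at hsum
      have hkey : τ' ^ q = 1 / ((q : ℝ) + 1) := by
        have h2 : (((q : ℝ) + 1) * τ' ^ q - 1) / (1 - τ' ^ q) ^ 2 = 0 := by linarith
        rw [div_eq_zero_iff] at h2
        rcases h2 with h2 | h2
        · field_simp
          linarith
        · exact absurd (pow_eq_zero_iff (by norm_num) |>.1 h2) h1y
      have : τ' = (τ' ^ q) ^ ((1 : ℝ) / q) := by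
        rw [← Real.rpow_natCast τ' q, ← Real.rpow_mul hτ'.le,
          mul_one_div_cancel hq0, Real.rpow_one]
      rw [this, hkey]
    · exfalso
      have hns : ¬ Summable (fun n : ℕ => ((q : ℝ) * (n + 1) - 1) * τ' ^ (q * (n + 1))) := by
        intro hs
        have htend := hs.tendsto_atTop_zero
        have hev : ∀ᶠ n : ℕ in Filter.atTop,
            ((q : ℝ) * (n + 1) - 1) * τ' ^ (q * (n + 1)) < 1 :=
          htend.eventually (gt_mem_nhds (by norm_num : (0 : ℝ) < 1))
        obtain ⟨n, hn1, hn2⟩ := (hev.and (Filter.eventually_ge_atTop 1)).exists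
        have hc1 : (1 : ℝ) ≤ (q : ℝ) * (n + 1) - 1 := by
          have hqr : (1 : ℝ) ≤ (q : ℝ) := by exact_mod_cast hq
          have hnr : (2 : ℝ) ≤ (n : ℝ) + 1 := by
            have : (1 : ℝ) ≤ (n : ℝ) := by exact_mod_cast hn2
            linarith
          nlinarith
        have hc2 : (1 : ℝ) ≤ τ' ^ (q * (n + 1)) := one_le_pow₀ hge
        nlinarith
      rw [tsum_eq_zero_of_not_summable hns] at hsum
      norm_num at hsum
  · -- rho
    rw [E2]
    field_simp
    ring
  · -- alpha
    rw [tsum_congr (g := fun n : ℕ =>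
        ((0 : ℝ) * ((n : ℝ) + 1) ^ 2 + (0 : ℝ) * ((n : ℝ) + 1) + (1 : ℝ)) * τ ^ (q * (n + 1)))
      (fun n => by ring), (tsum_form q hq 0 0 1 τ hτabs).tsum_eq, hτq, hsub]
    field_simp
    ring
  · -- beta
    rw [E2, E4]
    congr 1
    field_simp
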